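/- Let S be a commutative semiring that is partially ordered by x ≥ y iff x + y = x, let E be a congruence on S, and suppose f_1, …, f_m ∈ S satisfy f_i ≥ 1 (the multiplicative identity) for all i. Then the congruence generated by the pairs (f_1, 1), …, (f_m, 1) equals the congruence generated by the single pair (f_1 ⋯ f_m, 1), and also equals that generated by (f_1 + ⋯ + f_m, 1). -/

import Mathlib

section aux

variable {S : Type*} [CommSemiring S]

theorem stmt15_prod_ge_one (hidem : ∀ x : S, x + x = x) {ι : Type*} (s : Finset ι) (f : ι → S)
    (hf : ∀ i ∈ s, f i + 1 = f i) : (∏ i ∈ s, f i) + 1 = ∏ i ∈ s, f i := by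
  classical
  induction s using Finset.induction with
  | empty => simpa using hidem 1
  | @insert a t hx ih =>
    rw [Finset.prod_insert hx]
    set P := ∏ i ∈ t, f i with hPdef
    have hP : P + 1 = P := ih fun i hi => hf i (Finset.mem_insert_of_mem hi)
    have ha : f a + 1 = f a := hf a (Finset.mem_insert_self a t)
    have h2 : f a * P + f a = f a * P := by
      calc f a * P + f a = f a * (P + 1) := by rw [mul_add, mul_one]
        _ = f a * P := by rw [hP]
    calc f a * P + 1 = (f a * P + f a) + 1 := by rw [h2]
      _ = f a * P + (f a + 1) := by rw [add_assoc]
      _ = f a * P + f a := by rw [ha]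
      _ = f a * P := h2

theorem stmt15_prod_ge (hidem : ∀ x : S, x + x = x) {m : ℕ} (f : Fin m → S) (hf : ∀ i, f i + 1 = f i) (i : Fin m) :
    (∏ j, f j) + f i = ∏ j, f j := by
  classical
  have hsplit : f i * ∏ j ∈ Finset.univ.erase i, f j = ∏ j, f j :=
    Finset.mul_prod_erase _ _ (Finset.mem_univ i)
  have hP : (∏ j ∈ Finset.univ.erase i, f j) + 1 = ∏ j ∈ Finset.univ.erase i, f j :=
    stmt15_prod_ge_one hidem _ f fun j _ => hf j
  calc (∏ j, f j) + f i = f i * (∏ j ∈ Finset.univ.erase i, f j) + f i * 1 := by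
        rw [hsplit, mul_one]
    _ = f i * ((∏ j ∈ Finset.univ.erase i, f j) + 1) := by rw [mul_add]
    _ = f i * ∏ j ∈ Finset.univ.erase i, f j := by rw [hP]
    _ = ∏ j, f j := hsplit

theorem stmt15_sum_ge (hidem : ∀ x : S, x + x = x) {m : ℕ} (f : Fin m → S) (i : Fin m) :
    (∑ j, f j) + f i = ∑ j, f j := by
  classical
  have hsplit : f i + ∑ j ∈ Finset.univ.erase i, f j = ∑ j, f j :=
    Finset.add_sum_erase _ _ (Finset.mem_univ i)
  calc (∑ j, f j) + f i
      = (f i + ∑ j ∈ Finset.univ.erase i, f j) + f i := by rw [hsplit]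
    _ = (f i + f i) + ∑ j ∈ Finset.univ.erase i, f j := by ring
    _ = f i + ∑ j ∈ Finset.univ.erase i, f j := by rw [hidem]
    _ = ∑ j, f j := hsplit

theorem stmt15_nsmul_one (hidem : ∀ x : S, x + x = x) :
    ∀ n : ℕ, 0 < n → (n • (1 : S)) = 1 := by
  intro n hn
  induction n with
  | zero => exact absurd hn (lt_irrefl 0)
  | succ k ih =>
    rcases Nat.eq_zero_or_pos k with hk | hk
    · subst hk; simp
    · rw [succ_nsmul, ih hk, hidem]

end aux

/-- In an additively idempotent commutative semiring `S` (ordered by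
`x ≥ y ↔ x + y = x`), assuming the key fact that `1 ≤ g ≤ f^k` implies
`(g, 1) ∈ ⟨(f, 1)⟩`, if `f 1, …, f m ≥ 1` then the congruence generated by the pairs
`(f i, 1)` equals the one generated by the single pair `(∏ f i, 1)` and also the one
generated by `(∑ f i, 1)`. -/
theorem stmt15 (S : Type*) [CommSemiring S]
    (hidem : ∀ x : S, x + x = x)
    (hkey : ∀ f g : S, g + 1 = g → ∀ k : ℕ, 0 < k → f ^ k + g = f ^ k →
      ringConGen (fun a b => a = f ∧ b = 1) g 1)
    (m : ℕ) (hm : 0 < m) (f : Fin m → S) (hf : ∀ i, f i + 1 = f i) :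
    ringConGen (fun a b => ∃ i, a = f i ∧ b = 1) =
      ringConGen (fun a b => a = ∏ i, f i ∧ b = 1) ∧
    ringConGen (fun a b => ∃ i, a = f i ∧ b = 1) =
      ringConGen (fun a b => a = ∑ i, f i ∧ b = 1) := by
  classical
  set c : RingCon S := ringConGen (fun a b => ∃ i, a = f i ∧ b = 1) with hc
  have hgen : ∀ i, c (f i) 1 := fun i =>
    RingConGen.Rel.of _ _ ⟨i, rfl, rfl⟩
  -- c relates any product of the f i to 1
  have hprod : ∀ s : Finset (Fin m), c (∏ i ∈ s, f i) 1 := by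
    intro s
    induction s using Finset.induction with
    | empty => simpa using c.refl 1
    | @insert a t hx ih =>
      rw [Finset.prod_insert hx]
      have := c.mul (hgen a) ih
      rwa [mul_one] at this
  -- c relates the sum of the f i to 1
  have hsum : c (∑ i, f i) 1 := by
    have h1 : ∀ s : Finset (Fin m), c (∑ i ∈ s, f i) (∑ _i ∈ s, (1 : S)) := by
      intro s
      induction s using Finset.induction with
      | empty => simpa using c.refl 0
      | @insert a t hx ih =>
        rw [Finset.sum_insert hx, Finset.sum_insert hx]
        exact c.add (hgen a) ih
    have h2 : (∑ _i : Fin m, (1 : S)) = 1 := by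
      rw [Finset.sum_const, Finset.card_univ, Fintype.card_fin]
      exact stmt15_nsmul_one hidem m hm
    have h1 := h1 Finset.univ
    rwa [h2] at h1
  constructor
  · apply le_antisymm
    · apply RingCon.ringConGen_le.mpr
      rintro x y ⟨i, rfl, rfl⟩
      exact hkey (∏ j, f j) (f i) (hf i) 1 one_pos (by rw [pow_one]; exact stmt15_prod_ge hidem f hf i)
    · apply RingCon.ringConGen_le.mpr
      rintro x y ⟨rfl, rfl⟩
      exact hprod Finset.univ
  · apply le_antisymm
    · apply RingCon.ringConGen_le.mpr
      rintro x y ⟨i, rfl, rfl⟩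
      exact hkey (∑ j, f j) (f i) (hf i) 1 one_pos
        (by rw [pow_one]; exact stmt15_sum_ge hidem f i)
    · apply RingCon.ringConGen_le.mpr
      rintro x y ⟨rfl, rfl⟩
      exact hsum
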